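/- (Theorem 6.14, Hadamard three circles argument for Stieltjes transforms) Let a > 0 and let c₀ > 0. There exists δ_0 > 0 depending only on c₀ such that for every δ ∈ (0, δ_0) and every finite signed measure ν on ℝ with 2‖ν‖_TV / a ≤ c₀, setting c := 2‖ν‖_TV / a and r(δ) := exp(−4√(c/|log δ|)), the following holds: if sup{ |m_ν(z)| : z = i a (e + e^{iθ})/(e − e^{iθ}), θ ∈ [0, 2π] } ≤ δ, then sup_{z ∈ H_{a, r(δ)}} |m_ν(z)| ≤ exp(−√(c |log δ|)), where for r ∈ (0,1), H_{a,r} denotes the closed disc in ℂ⁺ with center i a (1 + r²)/(1 − r²) and radius 2ar/(1 − r²) (equivalently, the disc with diameter the segment [i a (1−r)/(1+r), i a (1+r)/(1−r)]). -/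

import Mathlib

open MeasureTheory

noncomputable section

/-- The Stieltjes transform `m_μ(z) = ∫ (t − z)⁻¹ dμ(t)` of a measure on `ℝ`. -/
def stP (μ : Measure ℝ) (z : ℂ) : ℂ := ∫ t, ((t : ℂ) - z)⁻¹ ∂μ

/-- The Stieltjes transform of a finite signed measure on `ℝ`. -/
def stS (ν : SignedMeasure ℝ) (z : ℂ) : ℂ :=
  stP ν.toJordanDecomposition.posPart z - stP ν.toJordanDecomposition.negPart z

/-- The symmetrization `μ^s(X) = (μ(X) + μ(−X))/2` of a measure on `ℝ`. -/
def symmM (μ : Measure ℝ) : Measure ℝ :=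
  (2 : ENNReal)⁻¹ • (μ + Measure.map (fun x : ℝ => -x) μ)

/-- A measure on `ℝ` is compactly supported. -/
def HasCompactSupportM (μ : Measure ℝ) : Prop := ∃ R : ℝ, μ {x : ℝ | R < |x|} = 0

/-- `(m, Sμ, Sν)` is the subordination triple for the pair `(μ, ν)` of compactly supported
probability measures on `ℝ`: the three functions are analytic on `ℂ⁺`, satisfy the
subordination system, the prescribed asymptotics as `|z| → ∞`, and `Sμ, Sν` take values
in the closed upper half-plane.  Such a triple exists and is unique, and `m` is the
Stieltjes transform of the free convolution `μ ⊞ ν`. -/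
structure IsSubTriple (μ ν : Measure ℝ) (m Sμ Sν : ℂ → ℂ) : Prop where
  diff_m : DifferentiableOn ℂ m {z : ℂ | 0 < z.im}
  diff_Sμ : DifferentiableOn ℂ Sμ {z : ℂ | 0 < z.im}
  diff_Sν : DifferentiableOn ℂ Sν {z : ℂ | 0 < z.im}
  eq1 : ∀ z : ℂ, 0 < z.im → m z = stP μ (z + Sν z)
  eq2 : ∀ z : ℂ, 0 < z.im → m z = stP ν (z + Sμ z)
  eq3 : ∀ z : ℂ, 0 < z.im → -(z + (m z)⁻¹) = Sμ z + Sν z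
  asympt_m : ∃ C R : ℝ, ∀ z : ℂ, 0 < z.im → R ≤ ‖z‖ →
      ‖m z + z⁻¹‖ ≤ C / ‖z‖ ^ 2
  asympt_S : ∃ C R : ℝ, ∀ z : ℂ, 0 < z.im → R ≤ ‖z‖ →
      ‖Sμ z‖ + ‖Sν z‖ ≤ C
  im_Sμ : ∀ z : ℂ, 0 < z.im → 0 ≤ (Sμ z).im
  im_Sν : ∀ z : ℂ, 0 < z.im → 0 ≤ (Sν z).im

/-- `κ_{μ,ν}(z)`, defined from the subordination functions `Sμ, Sν`. -/
def kappaF (μ ν : Measure ℝ) (Sμ Sν : ℂ → ℂ) (z : ℂ) : ℂ :=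
  (deriv (stP μ) (z + Sν z) + deriv (stP ν) (z + Sμ z)) * ((z + Sμ z + Sν z) ^ 2)⁻¹
    - deriv (stP μ) (z + Sν z) * deriv (stP ν) (z + Sμ z)

/-- `α_{μ,ν}(z)`. -/
def alphaF (μ ν : Measure ℝ) (Sμ Sν : ℂ → ℂ) (z : ℂ) : ℝ :=
  ((‖z + Sμ z + Sν z‖ ^ 2)⁻¹ + ‖deriv (stP μ) (z + Sν z)‖
      + ‖deriv (stP ν) (z + Sμ z)‖) / ‖kappaF μ ν Sμ Sν z‖

/-- `β_{μ,ν}(z)`. -/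
def betaF (μ ν : Measure ℝ) (Sμ Sν : ℂ → ℂ) (z : ℂ) : ℝ :=
  (‖z + Sμ z + Sν z‖ ^ 3)⁻¹
    + ‖deriv (deriv (stP μ)) (z + Sν z)‖
    + ‖deriv (deriv (stP ν)) (z + Sμ z)‖

/-- The singular values of an `N × N` complex matrix: the square roots of the eigenvalues
of the Hermitian matrix `Mᴴ M`. -/
def singVal {N : ℕ} (M : Matrix (Fin N) (Fin N) ℂ) (i : Fin N) : ℝ :=
  Real.sqrt ((Matrix.isHermitian_conjTranspose_mul_self M).eigenvalues i)

/-- The empirical singular value distribution `ν_M = N⁻¹ ∑ δ_{s_i}`. -/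
def empSV {N : ℕ} (M : Matrix (Fin N) (Fin N) ℂ) : Measure ℝ :=
  ((N : ENNReal))⁻¹ • ∑ i : Fin N, Measure.dirac (singVal M i)

/-- The point `i a (e + e^{iθ})/(e − e^{iθ})` of `ℂ⁺`. -/
def ringPt (a θ : ℝ) : ℂ :=
  Complex.I * (a : ℂ) * ((Real.exp 1 : ℂ) + Complex.exp (Complex.I * θ)) /
    ((Real.exp 1 : ℂ) - Complex.exp (Complex.I * θ))

-- ==================== auxiliary lemmas ====================

open Complex in
lemma resolvent_ne_zero {z : ℂ} (hz : 0 < z.im) (t : ℝ) : (t : ℂ) - z ≠ 0 := by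
  intro h
  have : ((t : ℂ) - z).im = 0 := by rw [h]; simp
  simp [Complex.sub_im] at this; linarith

open Complex in
lemma norm_resolvent_ge {z : ℂ} (hz : 0 < z.im) (t : ℝ) : z.im ≤ ‖(t : ℂ) - z‖ := by
  have := Complex.abs_im_le_norm ((t : ℂ) - z)
  rw [Complex.sub_im] at this
  simp only [Complex.ofReal_im, zero_sub, abs_neg] at this
  calc z.im ≤ |z.im| := le_abs_self _
  _ ≤ _ := this

open Complex in
lemma resolvent_norm_le {z : ℂ} (hz : 0 < z.im) (t : ℝ) :
    ‖((t : ℂ) - z)⁻¹‖ ≤ (z.im)⁻¹ := by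
  rw [norm_inv]
  exact inv_anti₀ hz (norm_resolvent_ge hz t)

lemma stP_integrable (μ : Measure ℝ) [IsFiniteMeasure μ] {z : ℂ} (hz : 0 < z.im) :
    Integrable (fun t : ℝ => ((t : ℂ) - z)⁻¹) μ := by
  apply (integrable_const ((z.im)⁻¹)).mono'
  · exact ((Complex.measurable_ofReal.sub measurable_const).inv).aestronglyMeasurable
  · exact Filter.Eventually.of_forall fun t => resolvent_norm_le hz t

lemma stP_norm_le (μ : Measure ℝ) [IsFiniteMeasure μ] {z : ℂ} (hz : 0 < z.im) :
    ‖stP μ z‖ ≤ (μ Set.univ).toReal / z.im := by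
  have := norm_integral_le_of_norm_le_const (μ := μ)
    (f := fun t : ℝ => ((t : ℂ) - z)⁻¹) (C := (z.im)⁻¹)
    (Filter.Eventually.of_forall fun t => resolvent_norm_le hz t)
  rw [div_eq_mul_inv, mul_comm]
  exact this

lemma stP_differentiableAt (μ : Measure ℝ) [IsFiniteMeasure μ] {z : ℂ} (hz : 0 < z.im) :
    DifferentiableAt ℂ (stP μ) z := by
  set ε := z.im / 2 with hε
  have hεpos : 0 < ε := by positivity
  have him : ∀ x ∈ Metric.ball z ε, ε < x.im := by
    intro x hx
    have h1 : |x.im - z.im| ≤ dist x z := by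
      simpa [Complex.dist_eq] using Complex.abs_im_le_norm (x - z)
    rw [Metric.mem_ball] at hx
    have := abs_lt.mp (lt_of_le_of_lt h1 hx)
    simp only [hε] at *
    linarith [this.1]
  have key := hasDerivAt_integral_of_dominated_loc_of_deriv_le (μ := μ) (𝕜 := ℂ)
    (F := fun x (t : ℝ) => ((t : ℂ) - x)⁻¹) (F' := fun x (t : ℝ) => (((t : ℂ) - x)^2)⁻¹)
    (x₀ := z) (bound := fun _ => (ε^2)⁻¹) (Metric.ball_mem_nhds z hεpos)
    ?_ (stP_integrable μ hz) ?_ ?_ (integrable_const _) ?_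
  · exact key.2.differentiableAt
  · filter_upwards with x
    exact ((Complex.measurable_ofReal.sub measurable_const).inv).aestronglyMeasurable
  · exact (((Complex.measurable_ofReal.sub
      measurable_const).pow measurable_const).inv).aestronglyMeasurable
  · filter_upwards with t
    intro x hx
    have hxim : 0 < x.im := lt_trans hεpos (him x hx)
    have h1 : ε ≤ ‖(t : ℂ) - x‖ := le_trans (le_of_lt (him x hx)) (norm_resolvent_ge hxim t)
    rw [norm_inv, norm_pow]
    refine inv_anti₀ (by positivity) ?_
    exact pow_le_pow_left₀ (le_of_lt hεpos) h1 2
  · filter_upwards with t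
    intro x hx
    have hxim : 0 < x.im := lt_trans hεpos (him x hx)
    have hne := resolvent_ne_zero hxim t
    have h1 : HasDerivAt (fun y : ℂ => (t : ℂ) - y) (-1) x := by
      simpa using (hasDerivAt_id x).const_sub (t : ℂ)
    have := h1.inv hne
    convert this using 1
    · rfl
    · rfl
    · simp

lemma stS_differentiableAt (ν : SignedMeasure ℝ) {z : ℂ} (hz : 0 < z.im) :
    DifferentiableAt ℂ (stS ν) z := by
  apply DifferentiableAt.sub <;> exact stP_differentiableAt _ hz

lemma stS_norm_le (ν : SignedMeasure ℝ) {z : ℂ} (hz : 0 < z.im) :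
    ‖stS ν z‖ ≤ (ν.totalVariation Set.univ).toReal / z.im := by
  have h1 := stP_norm_le ν.toJordanDecomposition.posPart hz
  have h2 := stP_norm_le ν.toJordanDecomposition.negPart hz
  have h3 : (ν.totalVariation Set.univ).toReal
      = (ν.toJordanDecomposition.posPart Set.univ).toReal
        + (ν.toJordanDecomposition.negPart Set.univ).toReal := by
    rw [SignedMeasure.totalVariation, Measure.add_apply,
      ENNReal.toReal_add (measure_ne_top _ _) (measure_ne_top _ _)]
  rw [stS, h3, add_div]
  exact le_trans (norm_sub_le _ _) (add_le_add h1 h2)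

noncomputable def phiM (a : ℝ) (w : ℂ) : ℂ := Complex.I * (a : ℂ) * (1 + w) / (1 - w)

lemma one_sub_ne_zero_of_abs_lt {w : ℂ} (hw : ‖w‖ < 1) : (1 : ℂ) - w ≠ 0 := by
  intro h
  rw [sub_eq_zero] at h
  rw [← h] at hw
  simp at hw

lemma phiM_im {a : ℝ} (ha : 0 < a) {w : ℂ} (hw : ‖w‖ < 1) :
    (phiM a w).im = a * (1 - ‖w‖ ^ 2) / Complex.normSq (1 - w) := by
  have hne : (1 : ℂ) - w ≠ 0 := one_sub_ne_zero_of_abs_lt hw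
  rw [phiM]
  rw [show Complex.I * (a : ℂ) * (1 + w) / (1 - w)
      = Complex.I * ((a:ℂ) * ((1 + w) / (1 - w))) by ring]
  rw [Complex.mul_im, Complex.I_re, Complex.I_im]
  simp only [zero_mul, one_mul, zero_add]
  rw [Complex.mul_re, Complex.ofReal_re, Complex.ofReal_im]
  simp only [zero_mul, sub_zero]
  rw [Complex.div_re]
  have : ‖w‖ ^ 2 = w.re^2 + w.im^2 := by
    rw [Complex.sq_norm, Complex.normSq_apply]; ring
  simp only [Complex.add_re, Complex.one_re, Complex.add_im, Complex.one_im,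
    Complex.sub_re, Complex.sub_im]
  rw [this]
  field_simp
  ring

lemma phiM_im_pos {a : ℝ} (ha : 0 < a) {w : ℂ} (hw : ‖w‖ < 1) :
    0 < (phiM a w).im := by
  rw [phiM_im ha hw]
  have h1 : 0 < 1 - ‖w‖ ^ 2 := by nlinarith [norm_nonneg w]
  have h2 : 0 < Complex.normSq (1 - w) :=
    Complex.normSq_pos.mpr (one_sub_ne_zero_of_abs_lt hw)
  positivity

lemma phiM_differentiableAt {a : ℝ} {w : ℂ} (hw : ‖w‖ < 1) :
    DifferentiableAt ℂ (phiM a) w := by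
  apply DifferentiableAt.div
  · fun_prop
  · fun_prop
  · exact one_sub_ne_zero_of_abs_lt hw

open Complex in
lemma ball_to_w {a r : ℝ} (ha : 0 < a) (hr0 : 0 < r) (hr1 : r < 1) {z : ℂ}
    (hz : z ∈ Metric.closedBall
        (Complex.I * (a : ℂ) * (((1 + r ^ 2) / (1 - r ^ 2) : ℝ) : ℂ))
        (2 * a * r / (1 - r ^ 2))) :
    ∃ w : ℂ, ‖w‖ ≤ r ∧ z = phiM a w := by
  have hd : 0 < 1 - r^2 := by nlinarith
  rw [Metric.mem_closedBall, Complex.dist_eq] at hz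
  set x := z.re with hx
  set y := z.im with hy
  have hz2 : x^2 + (y - a * ((1+r^2)/(1-r^2)))^2 ≤ (2*a*r/(1-r^2))^2 := by
    have h0 : (0:ℝ) ≤ 2*a*r/(1-r^2) := by positivity
    have := pow_le_pow_left₀ (norm_nonneg _) hz 2
    rw [Complex.sq_norm, Complex.normSq_apply] at this
    simp only [Complex.sub_re, Complex.sub_im, Complex.mul_re, Complex.mul_im,
      Complex.I_re, Complex.I_im, Complex.ofReal_re, Complex.ofReal_im] at this
    nlinarith [this]
  have hz5 : x^2*(1-r^2)^2 + (y*(1-r^2) - a*(1+r^2))^2 ≤ (2*a*r)^2 := by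
    have e1 : (x^2 + (y - a * ((1+r^2)/(1-r^2)))^2) * (1-r^2)^2
        = x^2*(1-r^2)^2 + (y*(1-r^2) - a*(1+r^2))^2 := by
      field_simp
    have e2 : (2*a*r/(1-r^2))^2 * (1-r^2)^2 = (2*a*r)^2 := by
      field_simp
    have := mul_le_mul_of_nonneg_right hz2 (le_of_lt (by positivity : (0:ℝ) < (1-r^2)^2))
    rw [e1, e2] at this
    exact this
  have hy0 : 0 < y := by
    by_contra hcon
    push_neg at hcon
    have h1 : 0 ≤ -y := neg_nonneg.mpr hcon
    have h2 : 0 ≤ (-y) * (1 - r^2) := mul_nonneg h1 hd.le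
    have h3 : 0 ≤ a * (1+r^2) := by positivity
    nlinarith [hz5, sq_nonneg x, mul_nonneg h2 h3, mul_pos (mul_pos ha hd) (mul_pos ha hd)]
  have hkey : x^2 + (y-a)^2 ≤ r^2 * (x^2 + (y+a)^2) := by
    nlinarith [hz5, hd, sq_nonneg x, sq_nonneg (y-a), sq_nonneg (y+a)]
  have hzia : z + Complex.I * a ≠ 0 := by
    intro h
    have : (z + Complex.I * a).im = 0 := by rw [h]; simp
    simp only [Complex.add_im, Complex.mul_im, Complex.I_re, Complex.I_im,
      Complex.ofReal_re, Complex.ofReal_im] at this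
    rw [← hy] at this
    nlinarith
  set w := (z - Complex.I * a) / (z + Complex.I * a) with hw
  refine ⟨w, ?_, ?_⟩
  · rw [hw, norm_div]
    have hns1 : Complex.normSq (z - Complex.I * a) = x^2 + (y-a)^2 := by
      rw [Complex.normSq_apply]
      simp only [Complex.sub_re, Complex.sub_im, Complex.mul_re, Complex.mul_im,
        Complex.I_re, Complex.I_im, Complex.ofReal_re, Complex.ofReal_im, ← hx, ← hy]
      ring
    have hns2 : Complex.normSq (z + Complex.I * a) = x^2 + (y+a)^2 := by
      rw [Complex.normSq_apply]
      simp only [Complex.add_re, Complex.add_im, Complex.mul_re, Complex.mul_im,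
        Complex.I_re, Complex.I_im, Complex.ofReal_re, Complex.ofReal_im, ← hx, ← hy]
      ring
    have habs : ‖z - Complex.I * a‖ ≤ r * ‖z + Complex.I * a‖ := by
      rw [Complex.norm_def, Complex.norm_def, hns1, hns2]
      have : r * Real.sqrt (x^2 + (y+a)^2) = Real.sqrt (r^2 * (x^2 + (y+a)^2)) := by
        rw [Real.sqrt_mul (by positivity), Real.sqrt_sq (le_of_lt hr0)]
      rw [this]
      exact Real.sqrt_le_sqrt hkey
    have hpos : 0 < ‖z + Complex.I * a‖ :=
      norm_pos_iff.mpr hzia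
    rw [div_le_iff₀ hpos]
    linarith [habs]
  · have h1w : (1:ℂ) - w = 2 * Complex.I * a / (z + Complex.I * a) := by
      rw [hw]
      field_simp
      ring
    have h1w' : (1:ℂ) - w ≠ 0 := by
      rw [h1w]
      apply div_ne_zero _ hzia
      simp [Complex.I_ne_zero, ne_of_gt ha, Complex.ofReal_ne_zero]
    rw [phiM, eq_div_iff h1w', hw]
    field_simp
    ring

open Complex in
lemma abs_exp_I_mul (y : ℝ) : ‖Complex.exp (Complex.I * y)‖ = 1 := by
  rw [Complex.norm_exp]
  simp [Complex.mul_re]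

open Complex in
lemma exp_sub_ne (y : ℝ) : (Real.exp 1 : ℂ) - Complex.exp (Complex.I * y) ≠ 0 := by
  intro h
  rw [sub_eq_zero] at h
  have := abs_exp_I_mul y
  rw [← h] at this
  rw [Complex.norm_of_nonneg (Real.exp_pos 1).le] at this
  nlinarith [Real.add_one_le_exp 1]

open Complex in
lemma ringPt_eq_phiM (a y : ℝ) :
    ringPt a y = phiM a (Complex.exp (Complex.I * y) / Real.exp 1) := by
  rw [ringPt, phiM]
  have he : (Real.exp 1 : ℂ) ≠ 0 := by
    simp [Real.exp_ne_zero]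
  have h2 : (1 : ℂ) - Complex.exp (Complex.I * y) / Real.exp 1 ≠ 0 := by
    rw [div_eq_inv_mul, ← sub_ne_zero] at *
    intro h
    apply exp_sub_ne y
    have := congrArg (fun t => (Real.exp 1 : ℂ) * t) h
    simp only [mul_zero] at this
    rw [← this]
    simp [mul_sub, ← mul_assoc, Complex.exp_ne_zero]
  rw [div_eq_div_iff (exp_sub_ne y) h2]
  field_simp

open Complex in
lemma exists_theta (y : ℝ) : ∃ θ ∈ Set.Icc (0:ℝ) (2 * Real.pi),
    Complex.exp (Complex.I * θ) = Complex.exp (Complex.I * y) := by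
  set n : ℤ := ⌊y / (2 * Real.pi)⌋ with hn
  refine ⟨y - 2 * Real.pi * n, ⟨?_, ?_⟩, ?_⟩
  · have := Int.floor_le (y / (2 * Real.pi))
    have hpi : 0 < 2 * Real.pi := by positivity
    rw [← hn] at this
    nlinarith [(le_div_iff₀ hpi).mp this]
  · have := Int.lt_floor_add_one (y / (2 * Real.pi))
    have hpi : 0 < 2 * Real.pi := by positivity
    rw [← hn] at this
    nlinarith [(div_lt_iff₀ hpi).mp this]
  · have : Complex.I * y = Complex.I * ((y:ℂ) - 2 * Real.pi * n) + n * (2 * Real.pi * Complex.I) := by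
      push_cast
      ring
    rw [show ((y - 2 * Real.pi * n : ℝ) : ℂ) = (y : ℂ) - 2 * Real.pi * n by push_cast; ring,
      this, Complex.exp_add, Complex.exp_int_mul_two_pi_mul_I, mul_one]

lemma arith_le_of_sq_le_sq {u L : ℝ} (h1 : u ^ 2 ≤ L ^ 2) (hu : 0 ≤ u) (hL : 0 < L) :
    u ≤ L := by nlinarith

lemma arith_mul_le_sq {c L : ℝ} (h : c ≤ L) (hL : 0 < L) (hc : 0 ≤ c) :
    c * L ≤ L ^ 2 := by nlinarith

lemma arith_quarter {d : ℝ} (hd : 0 ≤ d) (h1 : d ^ 2 ≤ 1 / 16) : d ≤ 1 / 4 := by nlinarith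

lemma arith_exp_lb {d : ℝ} (hd : 0 ≤ d) (hd2 : d ≤ 1 / 4) :
    d ≤ 1 - Real.exp (-(2 * d)) ^ 2 := by
  have hA : Real.exp (-(2 * d)) * (1 + 2 * d) ≤ 1 := by
    rw [Real.exp_neg, inv_mul_le_iff₀ (Real.exp_pos _), mul_one]
    linarith [Real.add_one_le_exp (2 * d)]
  have hpos := Real.exp_pos (-(2 * d))
  have h1 : d ≤ 1 - Real.exp (-(2 * d)) := by nlinarith
  have h2 : Real.exp (-(2 * d)) ≤ 1 := by nlinarith
  nlinarith

lemma arith_two_c_div {c L u : ℝ} (hL : 0 < L) (hu : 0 < u) (hu2 : u ^ 2 = c * L) :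
    2 * c / (u / L) = 2 * u := by
  rw [div_div_eq_mul_div, div_eq_iff (ne_of_gt hu)]
  linear_combination (-2) * hu2

lemma arith_two_mul_le_exp {u : ℝ} (hu : 0 ≤ u) : 2 * u ≤ Real.exp u := by
  have he : Real.exp u = Real.exp (u / 2) * Real.exp (u / 2) := by
    rw [← Real.exp_add]; ring_nf
  nlinarith [Real.add_one_le_exp (u / 2), Real.exp_pos (u / 2), sq_nonneg (u / 2 - 1)]

lemma arith_mul_le_self {u l : ℝ} (hu : 0 ≤ u) (hl : l ≤ 1) : 2 * u * l ≤ 2 * u := by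
  nlinarith

lemma gBound (ν : SignedMeasure ℝ) {a c : ℝ} (ha : 0 < a) (hc : 0 ≤ c)
    (hTV : (ν.totalVariation Set.univ).toReal = c * a / 2) {w : ℂ}
    (hw : ‖w‖ < 1) :
    ‖stS ν (phiM a w)‖ ≤ 2 * c / (1 - ‖w‖ ^ 2) := by
  have him := phiM_im_pos ha hw
  have h1 := stS_norm_le ν him
  have haw : 0 < 1 - ‖w‖ ^ 2 := by nlinarith [norm_nonneg w]
  have hnsqpos : 0 < Complex.normSq (1 - w) :=
    Complex.normSq_pos.mpr (one_sub_ne_zero_of_abs_lt hw)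
  have hns : Complex.normSq (1 - w) ≤ 4 := by
    have h4 : ‖1 - w‖ ≤ 2 := by
      calc ‖1 - w‖ ≤ ‖(1 : ℂ)‖ + ‖w‖ := by
            simpa using norm_sub_le (1 : ℂ) w
      _ ≤ 2 := by simp; linarith
    rw [← Complex.sq_norm]
    nlinarith [norm_nonneg (1 - w)]
  refine le_trans h1 ?_
  rw [hTV, phiM_im ha hw]
  rw [div_le_div_iff₀ (by positivity) haw]
  rw [show 2 * c * (a * (1 - ‖w‖ ^ 2) / Complex.normSq (1 - w))
      = 2 * c * a * (1 - ‖w‖ ^ 2) / Complex.normSq (1 - w) by ring]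
  rw [le_div_iff₀ hnsqpos]
  have := mul_le_mul_of_nonneg_left hns
    (show (0:ℝ) ≤ c * a / 2 * (1 - ‖w‖ ^ 2) by positivity)
  nlinarith [this]

lemma small_disc_bound (ν : SignedMeasure ℝ) {a δ : ℝ} (ha : 0 < a)
    (hring : ∀ θ ∈ Set.Icc (0:ℝ) (2 * Real.pi), ‖stS ν (ringPt a θ)‖ ≤ δ)
    {w : ℂ} (hw : ‖w‖ ≤ Real.exp (-1)) :
    ‖stS ν (phiM a w)‖ ≤ δ := by
  have he1 : (0:ℝ) < Real.exp (-1) := Real.exp_pos _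
  have he1lt : Real.exp (-1) < 1 := by
    rw [← Real.exp_zero]
    exact Real.exp_lt_exp.mpr (by norm_num)
  set U := Metric.ball (0:ℂ) (Real.exp (-1)) with hU
  have hclos : closure U = Metric.closedBall (0:ℂ) (Real.exp (-1)) :=
    closure_ball (0:ℂ) (ne_of_gt he1)
  have hdiff : DifferentiableOn ℂ (fun w => stS ν (phiM a w)) (closure U) := by
    intro w' hw'
    rw [hclos, Metric.mem_closedBall, Complex.dist_eq, sub_zero] at hw'
    have hlt : ‖w'‖ < 1 := lt_of_le_of_lt hw' he1lt
    exact (DifferentiableAt.comp _ (stS_differentiableAt ν (phiM_im_pos ha hlt))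
      (phiM_differentiableAt hlt)).differentiableWithinAt
  have hdc : DiffContOnCl ℂ (fun w => stS ν (phiM a w)) U :=
    ⟨hdiff.mono subset_closure, hdiff.continuousOn⟩
  apply Complex.norm_le_of_forall_mem_frontier_norm_le Metric.isBounded_ball hdc ?_ ?_
  · intro w' hw'
    rw [frontier_ball (0:ℂ) (ne_of_gt he1)] at hw'
    have habs : ‖w'‖ = Real.exp (-1) := by
      simpa [Complex.dist_eq] using hw'
    obtain ⟨θ, hθ, hexp⟩ := exists_theta (Complex.arg w')
    have h0 : w' = ((Real.exp (-1) : ℝ) : ℂ) * Complex.exp (Complex.I * Complex.arg w') := by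
      conv_lhs => rw [← Complex.norm_mul_exp_arg_mul_I w']
      rw [habs, mul_comm ((Complex.arg w' : ℂ)) Complex.I]
    have hw'eq : w' = Complex.exp (Complex.I * θ) / Real.exp 1 := by
      calc w' = ((Real.exp (-1) : ℝ) : ℂ) * Complex.exp (Complex.I * Complex.arg w') := h0
      _ = ((Real.exp (-1) : ℝ) : ℂ) * Complex.exp (Complex.I * θ) := by rw [hexp]
      _ = Complex.exp (Complex.I * θ) / Real.exp 1 := by
          rw [Real.exp_neg, Complex.ofReal_inv]
          ring
    rw [hw'eq, ← ringPt_eq_phiM]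
    exact hring θ hθ
  · rw [hclos, Metric.mem_closedBall, Complex.dist_eq, sub_zero]
    exact hw

open Complex.HadamardThreeLines in
lemma strip_bound (ν : SignedMeasure ℝ) {a c δ M l : ℝ} (ha : 0 < a) (hc : 0 ≤ c)
    (hTV : (ν.totalVariation Set.univ).toReal = c * a / 2)
    (hl0 : 0 < l) (hl1 : l < 1) (hδ : 0 ≤ δ)
    (hring : ∀ θ ∈ Set.Icc (0:ℝ) (2 * Real.pi), ‖stS ν (ringPt a θ)‖ ≤ δ)
    (hM : 2 * c / (1 - Real.exp (-1 + l) ^ 2) ≤ M)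
    {ζ : ℂ} (hζ : ζ.re ∈ Set.Icc (0:ℝ) 1) :
    ‖stS ν (phiM a (Complex.exp (-1 + ζ * (l:ℂ))))‖ ≤ δ ^ (1 - ζ.re) * M ^ ζ.re := by
  set ρ := Real.exp (-1 + l) with hρdef
  have hρ1 : ρ < 1 := by
    have := Real.exp_lt_exp.mpr (show -1 + l < 0 by linarith)
    rwa [Real.exp_zero] at this
  have hρ0 : 0 < ρ := Real.exp_pos _
  have habs : ∀ ξ : ℂ, ‖Complex.exp (-1 + ξ * (l:ℂ))‖
      = Real.exp (-1 + ξ.re * l) := by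
    intro ξ
    rw [Complex.norm_exp]
    congr 1
    simp [Complex.add_re, Complex.mul_re]
  have habs_le : ∀ ξ : ℂ, ξ.re ≤ 1 → ‖Complex.exp (-1 + ξ * (l:ℂ))‖ ≤ ρ := by
    intro ξ hξ
    rw [habs, hρdef]
    apply Real.exp_le_exp.mpr
    nlinarith
  set F : ℂ → ℂ := fun ξ => stS ν (phiM a (Complex.exp (-1 + ξ * (l:ℂ)))) with hF
  have hdiff : DifferentiableOn ℂ F (verticalClosedStrip 0 1) := by
    intro ξ hξ
    have hlt : ‖Complex.exp (-1 + ξ * (l:ℂ))‖ < 1 :=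
      lt_of_le_of_lt (habs_le ξ hξ.2) hρ1
    have h1 : DifferentiableAt ℂ (fun ξ : ℂ => Complex.exp (-1 + ξ * (l:ℂ))) ξ := by
      fun_prop
    have h2 : DifferentiableAt ℂ (fun w => stS ν (phiM a w))
        (Complex.exp (-1 + ξ * (l:ℂ))) :=
      DifferentiableAt.comp _ (stS_differentiableAt ν (phiM_im_pos ha hlt))
        (phiM_differentiableAt hlt)
    exact (h2.comp ξ h1).differentiableWithinAt
  have hsub : closure (verticalStrip 0 1) ⊆ verticalClosedStrip 0 1 :=
    closure_minimal (fun x hx => ⟨le_of_lt hx.1, le_of_lt hx.2⟩)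
      (IsClosed.preimage Complex.continuous_re isClosed_Icc)
  have hdc : DiffContOnCl ℂ F (verticalStrip 0 1) :=
    ⟨hdiff.mono (fun x hx => ⟨le_of_lt hx.1, le_of_lt hx.2⟩),
      (hdiff.continuousOn).mono hsub⟩
  have hbd : ∀ ξ ∈ verticalClosedStrip 0 1, ‖F ξ‖ ≤ 2 * c / (1 - ρ ^ 2) := by
    intro ξ hξ
    have hle : ‖Complex.exp (-1 + ξ * (l:ℂ))‖ ≤ ρ := habs_le ξ hξ.2
    have hlt : ‖Complex.exp (-1 + ξ * (l:ℂ))‖ < 1 := lt_of_le_of_lt hle hρ1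
    refine le_trans (gBound ν ha hc hTV hlt) ?_
    apply div_le_div_of_nonneg_left (by linarith) (by nlinarith) ?_
    nlinarith [norm_nonneg (Complex.exp (-1 + ξ * (l:ℂ)))]
  apply Complex.HadamardThreeLines.norm_le_interp_of_mem_verticalClosedStrip₀₁' F hζ hdc
  · refine ⟨2 * c / (1 - ρ ^ 2), ?_⟩
    rintro x ⟨ξ, hξ, rfl⟩
    exact hbd ξ hξ
  · intro ξ hξ
    have h0 : ξ.re = 0 := hξ
    have : ‖Complex.exp (-1 + ξ * (l:ℂ))‖ ≤ Real.exp (-1) := by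
      rw [habs, h0]
      simp
    exact small_disc_bound ν ha hring this
  · intro ξ hξ
    have h1 : ξ.re = 1 := hξ
    refine le_trans (hbd ξ ?_) hM
    exact ⟨by rw [h1]; norm_num, by rw [h1]⟩

set_option maxHeartbeats 1000000 in
/-- **Theorem 6.14 (Hadamard three circles argument for Stieltjes transforms).**
Here `c = 2‖ν‖_TV/a`, `r = r(δ) = exp(−4√(c/|log δ|))`, and `H_{a,r}` is the closed disc
with center `i a (1 + r²)/(1 − r²)` and radius `2ar/(1 − r²)`. -/
theorem hadamard_three_circles_stieltjes (a c₀ : ℝ) (ha : 0 < a) (hc₀ : 0 < c₀) :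
    ∃ δ₀ : ℝ, 0 < δ₀ ∧
      ∀ δ : ℝ, 0 < δ → δ < δ₀ →
      ∀ ν : SignedMeasure ℝ,
      ∀ c r : ℝ,
        c = 2 * (ν.totalVariation Set.univ).toReal / a →
        r = Real.exp (-(4 * Real.sqrt (c / |Real.log δ|))) →
        c ≤ c₀ →
        (∀ θ ∈ Set.Icc (0 : ℝ) (2 * Real.pi),
          ‖stS ν (ringPt a θ)‖ ≤ δ) →
        ∀ z ∈ Metric.closedBall
            (Complex.I * (a : ℂ) * (((1 + r ^ 2) / (1 - r ^ 2) : ℝ) : ℂ))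
            (2 * a * r / (1 - r ^ 2)),
          ‖stS ν z‖ ≤ Real.exp (-Real.sqrt (c * |Real.log δ|)) := by
  refine ⟨Real.exp (-(16 * c₀ + 16)), Real.exp_pos _, ?_⟩
  intro δ hδ0 hδδ₀ ν c r hc hr hcc₀ hring z hz
  have hTnn : (0:ℝ) ≤ (ν.totalVariation Set.univ).toReal := ENNReal.toReal_nonneg
  have hcnn : 0 ≤ c := by rw [hc]; positivity
  have hTV : (ν.totalVariation Set.univ).toReal = c * a / 2 := by
    rw [hc]; field_simp
  have hδ1 : δ < 1 := by
    refine lt_trans hδδ₀ ?_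
    have := Real.exp_lt_exp.mpr (show -(16 * c₀ + 16) < 0 by linarith)
    rwa [Real.exp_zero] at this
  set L := |Real.log δ| with hLdef
  have hlogδ : Real.log δ < 0 := Real.log_neg hδ0 hδ1
  have hL : L = -Real.log δ := abs_of_neg hlogδ
  have hLbig : 16 * c₀ + 16 < L := by
    have h := Real.log_lt_log hδ0 hδδ₀
    rw [Real.log_exp] at h
    linarith
  have hLpos : 0 < L := by linarith
  set u := Real.sqrt (c * L) with hu
  have hunn : 0 ≤ u := Real.sqrt_nonneg _
  have hu2 : u ^ 2 = c * L := Real.sq_sqrt (by positivity)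
  -- case c = 0
  rcases eq_or_lt_of_le hcnn with hc0 | hc0
  · have hT0 : ν.totalVariation Set.univ = 0 := by
      have h1 : (ν.totalVariation Set.univ).toReal = 0 := by rw [hTV, ← hc0]; ring
      have h2 : ν.totalVariation Set.univ ≠ ⊤ := by
        rw [SignedMeasure.totalVariation, Measure.add_apply]
        exact ENNReal.add_ne_top.mpr ⟨measure_ne_top _ _, measure_ne_top _ _⟩
      exact (ENNReal.toReal_eq_zero_iff _).mp h1 |>.resolve_right h2
    rw [SignedMeasure.totalVariation, Measure.add_apply] at hT0
    obtain ⟨hp0, hn0⟩ := add_eq_zero.mp hT0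
    have hpp : ν.toJordanDecomposition.posPart = 0 := Measure.measure_univ_eq_zero.mp hp0
    have hnn : ν.toJordanDecomposition.negPart = 0 := Measure.measure_univ_eq_zero.mp hn0
    have hzero : stS ν z = 0 := by
      rw [stS, stP, stP, hpp, hnn, integral_zero_measure, sub_zero]
    rw [hzero]
    simp only [norm_zero]
    exact le_of_lt (Real.exp_pos _)
  -- main case c > 0
  have hupos : 0 < u := Real.sqrt_pos.mpr (by positivity)
  have hdpos : 0 < u / L := div_pos hupos hLpos
  have hsqrt : Real.sqrt (c / L) = u / L := by
    rw [show c / L = c * L / L ^ 2 by field_simp,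
      Real.sqrt_div (by positivity : (0:ℝ) ≤ c * L), Real.sqrt_sq hLpos.le]
  have hrr : r = Real.exp (-(4 * (u / L))) := by rw [hr, hsqrt]
  have hcL : c ≤ L := le_trans hcc₀ (by linarith)
  have huL : u ≤ L := arith_le_of_sq_le_sq
    (by rw [hu2]; exact arith_mul_le_sq hcL hLpos hcnn) hunn hLpos
  have hxnn : 0 ≤ u / L := hdpos.le
  have hx4 : u / L ≤ 1 / 4 := by
    apply arith_quarter hxnn
    have h1 : (u / L) ^ 2 = c / L := by
      rw [div_pow, hu2]
      field_simp
    rw [h1, div_le_div_iff₀ hLpos (by norm_num : (0:ℝ) < 16)]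
    linarith
  set l := 1 - 2 * (u / L) with hldef
  have hl0 : 0 < l := by rw [hldef]; linarith
  have hll1 : l < 1 := by rw [hldef]; linarith
  have hl1 : l ≤ 1 := le_of_lt hll1
  -- bound M
  set M := max δ (2 * u) with hM
  have hδM : δ ≤ M := le_max_left _ _
  have hMpos : 0 < M := lt_of_lt_of_le hδ0 hδM
  have hρeq : (-1 : ℝ) + l = -(2 * (u / L)) := by rw [hldef]; ring
  have hMb : 2 * c / (1 - Real.exp (-1 + l) ^ 2) ≤ M := by
    have h1ρ2 : u / L ≤ 1 - Real.exp (-(2 * (u / L))) ^ 2 := arith_exp_lb hxnn hx4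
    calc 2 * c / (1 - Real.exp (-1 + l) ^ 2)
        ≤ 2 * c / (u / L) := by
          rw [hρeq]
          exact div_le_div_of_nonneg_left (by linarith) hdpos h1ρ2
    _ = 2 * u := arith_two_c_div hLpos hupos hu2
    _ ≤ M := le_max_right _ _
  -- get w
  have hr0' : 0 < r := by rw [hrr]; exact Real.exp_pos _
  have hr1' : r < 1 := by
    rw [hrr]
    have := Real.exp_lt_exp.mpr (show -(4 * (u / L)) < 0 by linarith)
    rwa [Real.exp_zero] at this
  obtain ⟨w, hwr, hzw⟩ := ball_to_w ha hr0' hr1' hz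
  rw [hzw]
  have hδexp : δ ≤ Real.exp (-u) := by
    calc δ = Real.exp (Real.log δ) := (Real.exp_log hδ0).symm
    _ ≤ Real.exp (-u) := Real.exp_le_exp.mpr (by
        have h5 : Real.log δ = -L := by rw [hL]; ring
        linarith)
  by_cases hsm : ‖w‖ ≤ Real.exp (-1)
  · exact le_trans (small_disc_bound ν ha hring hsm) hδexp
  · push_neg at hsm
    have hw0 : w ≠ 0 := by
      intro h
      rw [h] at hsm
      simp only [norm_zero] at hsm
      linarith [Real.exp_pos (-1 : ℝ)]
    have hawpos : 0 < ‖w‖ := lt_trans (Real.exp_pos _) hsm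
    set ζ := (Complex.log w + 1) / ((l : ℝ) : ℂ) with hζdef
    have hlne : ((l : ℝ) : ℂ) ≠ 0 := by
      simp only [ne_eq, Complex.ofReal_eq_zero]
      exact ne_of_gt hl0
    have hexpζ : Complex.exp (-1 + ζ * ((l : ℝ) : ℂ)) = w := by
      rw [hζdef, div_mul_cancel₀ _ hlne,
        show (-1 : ℂ) + (Complex.log w + 1) = Complex.log w by ring]
      exact Complex.exp_log hw0
    have hζre : ζ.re = (Real.log (‖w‖) + 1) / l := by
      rw [hζdef, Complex.div_ofReal_re, Complex.add_re, Complex.log_re, Complex.one_re]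
    have hlogw_ge : -1 ≤ Real.log (‖w‖) := by
      have := Real.log_lt_log (Real.exp_pos (-1)) hsm
      rw [Real.log_exp] at this
      linarith
    have hlogw_le : Real.log (‖w‖) ≤ -(4 * (u / L)) := by
      rw [show -(4 * (u / L)) = Real.log r by rw [hrr, Real.log_exp]]
      exact Real.log_le_log hawpos hwr
    set t' := (1 - 4 * (u / L)) / l with ht'def
    have hxle : ζ.re ≤ t' := by
      rw [hζre, ht'def]
      gcongr
      linarith
    have hxnn2 : 0 ≤ ζ.re := by
      rw [hζre]
      apply div_nonneg _ hl0.le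
      linarith
    have ht'le1 : t' ≤ 1 := by
      rw [ht'def, div_le_one hl0, hldef]
      linarith
    have ht'nn : 0 ≤ t' := div_nonneg (by linarith) hl0.le
    have hstrip := strip_bound ν ha hcnn hTV hl0 hll1 hδ0.le hring hMb
      (ζ := ζ) ⟨hxnn2, le_trans hxle ht'le1⟩
    rw [hexpζ] at hstrip
    have hmono : δ ^ (1 - ζ.re) * M ^ ζ.re ≤ δ ^ (1 - t') * M ^ t' := by
      have e : ∀ s : ℝ, δ ^ (1 - s) * M ^ s = δ * (M / δ) ^ s := by
        intro s
        rw [Real.rpow_sub hδ0, Real.rpow_one, Real.div_rpow hMpos.le hδ0.le]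
        field_simp
      rw [e, e]
      apply mul_le_mul_of_nonneg_left _ hδ0.le
      exact Real.rpow_le_rpow_of_exponent_le ((one_le_div hδ0).mpr hδM) hxle
    have htl : t' * l = 1 - 4 * (u / L) := by
      rw [ht'def]
      field_simp
    have hLl : L * l = L - 2 * u := by
      rw [hldef]
      field_simp
    have h1t' : L * (1 - t') * l = 2 * u := by
      calc L * (1 - t') * l = L * l - L * (t' * l) := by ring
      _ = (L - 2 * u) - L * (1 - 4 * (u / L)) := by rw [hLl, htl]
      _ = 2 * u := by
          field_simp
          ring
    have hstep3 : δ ^ (1 - t') ≤ Real.exp (-(2 * u)) := by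
      rw [Real.rpow_def_of_pos hδ0]
      apply Real.exp_le_exp.mpr
      have hlog : Real.log δ = -L := by rw [hL]; ring
      rw [hlog]
      have h2l : 2 * u ≤ L * (1 - t') := by
        have hA : 0 ≤ L * (1 - t') := mul_nonneg hLpos.le (by linarith)
        have h6 := mul_le_mul_of_nonneg_left hl1 hA
        rw [mul_one] at h6
        linarith [h1t', h6]
      linarith [h2l]
    have hMA : M ≤ max 1 (2 * u) := max_le_max (le_of_lt hδ1) le_rfl
    have hA1 : (1:ℝ) ≤ max 1 (2 * u) := le_max_left _ _
    have hstep4 : M ^ t' ≤ max 1 (2 * u) := by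
      calc M ^ t' ≤ (max 1 (2 * u)) ^ t' := Real.rpow_le_rpow hMpos.le hMA ht'nn
      _ ≤ (max 1 (2 * u)) ^ (1:ℝ) := Real.rpow_le_rpow_of_exponent_le hA1 ht'le1
      _ = max 1 (2 * u) := Real.rpow_one _
    have hAexp : max 1 (2 * u) ≤ Real.exp u := by
      apply max_le
      · rw [show (1:ℝ) = Real.exp 0 by rw [Real.exp_zero]]
        exact Real.exp_le_exp.mpr hunn
      · exact arith_two_mul_le_exp hunn
    calc ‖stS ν (phiM a w)‖ ≤ δ ^ (1 - ζ.re) * M ^ ζ.re := hstrip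
    _ ≤ δ ^ (1 - t') * M ^ t' := hmono
    _ ≤ Real.exp (-(2 * u)) * max 1 (2 * u) := by
        apply mul_le_mul hstep3 hstep4 (Real.rpow_nonneg hMpos.le _) (Real.exp_nonneg _)
    _ ≤ Real.exp (-(2 * u)) * Real.exp u := by
        apply mul_le_mul_of_nonneg_left hAexp (Real.exp_nonneg _)
    _ = Real.exp (-u) := by rw [← Real.exp_add]; ring_nf
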